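/- arXiv:2502.19901 — 8 statements merged into one kernel-verified Lean document; each statement's English description precedes it below -/
import Mathlib

section
/- Let b>0, μ∈ℝ, r>0, x_R∈(0,b), and set β=√(μ²+2r). Define π(x) = (sinh((b−x_R)β) + e^{μ(b−x)}·sinh((x_R−x)β)) / (sinh((b−x_R)β) + e^{bμ}·sinh(x_R β)) for x∈[0,b]. Then π satisfies (1/2)π''(x) + μ·π'(x) − r·π(x) + r·π(x_R) = 0 for all x∈(0,b), together with the boundary conditions π(0)=1 and π(b)=0. -/
open Real

theorem stmt0 (b μ r x_R : ℝ) (hb : 0 < b) (hr : 0 < r)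
    (hxR : x_R ∈ Set.Ioo 0 b)
    (β : ℝ) (hβ : β = Real.sqrt (μ ^ 2 + 2 * r))
    (piExit : ℝ → ℝ)
    (hpiExit : ∀ x, piExit x =
      (Real.sinh ((b - x_R) * β) + Real.exp (μ * (b - x)) * Real.sinh ((x_R - x) * β)) /
      (Real.sinh ((b - x_R) * β) + Real.exp (b * μ) * Real.sinh (x_R * β))) :
    (∀ x ∈ Set.Ioo 0 b,
      (1 / 2) * deriv (deriv piExit) x + μ * deriv piExit x - r * piExit x + r * piExit x_R = 0) ∧
    piExit 0 = 1 ∧ piExit b = 0 := by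
  obtain ⟨hx0, hxb⟩ := hxR
  have hβpos : 0 < β := by
    rw [hβ]; exact Real.sqrt_pos.mpr (by nlinarith [sq_nonneg μ])
  have hβ2 : β ^ 2 = μ ^ 2 + 2 * r := by
    rw [hβ, Real.sq_sqrt (by nlinarith [sq_nonneg μ])]
  set A := Real.sinh ((b - x_R) * β) with hA
  set D := A + Real.exp (b * μ) * Real.sinh (x_R * β) with hD
  have hDpos : 0 < D := by
    have h1 : 0 < A := Real.sinh_pos_iff.mpr (mul_pos (by linarith) hβpos)
    have h2 : 0 < Real.exp (b * μ) * Real.sinh (x_R * β) :=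
      mul_pos (Real.exp_pos _) (Real.sinh_pos_iff.mpr (mul_pos hx0 hβpos))
    rw [hD]; linarith
  set f : ℝ → ℝ := fun x => A + Real.exp (μ * (b - x)) * Real.sinh ((x_R - x) * β) with hf
  set f1 : ℝ → ℝ := fun x => Real.exp (μ * (b - x)) *
      (-μ * Real.sinh ((x_R - x) * β) - β * Real.cosh ((x_R - x) * β)) with hf1
  set f2 : ℝ → ℝ := fun x => Real.exp (μ * (b - x)) *
      ((μ ^ 2 + β ^ 2) * Real.sinh ((x_R - x) * β)
        + 2 * μ * β * Real.cosh ((x_R - x) * β)) with hf2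
  have hinner : ∀ x : ℝ, HasDerivAt (fun x => (x_R - x) * β) (-β) x := by
    intro x
    have := ((hasDerivAt_id x).const_sub x_R).mul_const β
    simpa using this
  have hexp : ∀ x : ℝ, HasDerivAt (fun x => Real.exp (μ * (b - x)))
      (Real.exp (μ * (b - x)) * (-μ)) x := by
    intro x
    have h1 : HasDerivAt (fun x => μ * (b - x)) (-μ) x := by
      have := ((hasDerivAt_id x).const_sub b).const_mul μ
      simpa using this
    exact h1.exp
  have hsinh : ∀ x : ℝ, HasDerivAt (fun x => Real.sinh ((x_R - x) * β))
      (Real.cosh ((x_R - x) * β) * (-β)) x := fun x => (hinner x).sinh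
  have hcosh : ∀ x : ℝ, HasDerivAt (fun x => Real.cosh ((x_R - x) * β))
      (Real.sinh ((x_R - x) * β) * (-β)) x := fun x => (hinner x).cosh
  have hdf : ∀ x, HasDerivAt f (f1 x) x := by
    intro x
    have h := (hasDerivAt_const x A).add ((hexp x).mul (hsinh x))
    refine h.congr_deriv ?_
    simp only [hf1]
    ring
  have hdf1 : ∀ x, HasDerivAt f1 (f2 x) x := by
    intro x
    have h := (hexp x).mul (((hsinh x).const_mul (-μ)).sub ((hcosh x).const_mul β))
    refine h.congr_deriv ?_
    simp only [hf2, Pi.sub_apply]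
    ring
  have hpifun : piExit = fun x => f x / D := by
    funext x
    rw [hpiExit x]
  have hderiv : deriv piExit = fun x => f1 x / D := by
    funext x
    rw [hpifun]
    exact ((hdf x).div_const D).deriv
  have hderiv2 : ∀ x, deriv (deriv piExit) x = f2 x / D := by
    intro x
    rw [hderiv]
    exact ((hdf1 x).div_const D).deriv
  refine ⟨?_, ?_, ?_⟩
  · intro x hx
    rw [hderiv2 x, hderiv, hpifun]
    simp only
    have hfxR : f x_R = A := by
      simp [hf]
    have hnum : (1 / 2) * f2 x + μ * f1 x - r * f x + r * f x_R = 0 := by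
      rw [hfxR]
      simp only [hf, hf1, hf2]
      rw [hβ2]
      ring
    have heq : (1 / 2) * (f2 x / D) + μ * (f1 x / D) - r * (f x / D) + r * (f x_R / D) =
        ((1 / 2) * f2 x + μ * f1 x - r * f x + r * f x_R) / D := by ring
    rw [heq, hnum, zero_div]
  · rw [hpiExit 0]
    have : μ * (b - 0) = b * μ := by ring
    rw [this, sub_zero]
    exact div_self (ne_of_gt hDpos)
  · rw [hpiExit b]
    have h1 : (x_R - b) * β = -((b - x_R) * β) := by ring
    rw [h1, Real.sinh_neg, sub_self, mul_zero, Real.exp_zero, one_mul, add_neg_cancel, zero_div]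
end

section
/- Let b>0, μ∈ℝ, x_R∈(0,b), and for r>0 set β_r=√(μ²+2r) and π_r = sinh((b−x_R)β_r) / (sinh((b−x_R)β_r) + e^{bμ}·sinh(x_R β_r)). Then as r→+∞: if x_R < b/2 then π_r → 1; if x_R = b/2 then π_r → 1/(1+e^{μb}); and if x_R > b/2 then π_r → 0. -/
open Real Filter

lemma ratio0 (p q : ℝ) (hp : 0 < p) (hpq : p < q) :
    Tendsto (fun t => Real.sinh (p * t) / Real.sinh (q * t)) atTop (nhds 0) := by
  have hq : 0 < q := hp.trans hpq
  have hg : Tendsto (fun t : ℝ => 4 * Real.exp ((p - q) * t)) atTop (nhds 0) := by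
    have hlin : Tendsto (fun t : ℝ => (p - q) * t) atTop atBot := by
      have h : Tendsto (fun t : ℝ => (q - p) * t) atTop atTop :=
        tendsto_id.const_mul_atTop (by linarith)
      have h2 : Tendsto (fun t : ℝ => -((q - p) * t)) atTop atBot :=
        tendsto_neg_atBot_iff.mpr h
      convert h2 using 2 with t
      ring
    have := Real.tendsto_exp_atBot.comp hlin
    simpa using this.const_mul (4 : ℝ)
  apply squeeze_zero' (g := fun t => 4 * Real.exp ((p - q) * t)) ?_ ?_ hg
  · filter_upwards [eventually_gt_atTop 0] with t ht
    have h1 : 0 < Real.sinh (p * t) := Real.sinh_pos_iff.mpr (by positivity)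
    have h2 : 0 < Real.sinh (q * t) := Real.sinh_pos_iff.mpr (by positivity)
    positivity
  · filter_upwards [eventually_ge_atTop (1 / q)] with t ht
    have ht0 : 0 < t := lt_of_lt_of_le (by positivity) ht
    have hqt : 1 ≤ q * t := by
      rw [div_le_iff₀ hq] at ht; linarith
    have h2 : 0 < Real.sinh (q * t) := Real.sinh_pos_iff.mpr (by positivity)
    rw [div_le_iff₀ h2, Real.sinh_eq, Real.sinh_eq]
    have f1 : Real.exp ((p - q) * t) * Real.exp (q * t) = Real.exp (p * t) := by
      rw [← Real.exp_add]; ring_nf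
    have f2 : Real.exp ((p - q) * t) * Real.exp (-(q * t)) =
        Real.exp ((p - q) * t - q * t) := by
      rw [← Real.exp_add]; ring_nf
    have f3 : Real.exp ((p - q) * t - q * t) * Real.exp (2 * (q * t)) =
        Real.exp (p * t) := by
      rw [← Real.exp_add]; ring_nf
    have f4 : (2 : ℝ) ≤ Real.exp (2 * (q * t)) := by
      have := Real.add_one_le_exp (2 * (q * t))
      nlinarith
    have e1 := Real.exp_pos ((p - q) * t - q * t)
    have e2 := Real.exp_pos (-(p * t))
    have e3 := Real.exp_pos (p * t)
    nlinarith [mul_nonneg e1.le (sub_nonneg.mpr f4)]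

theorem stmt1 (b μ x_R : ℝ) (hb : 0 < b) (hxR : x_R ∈ Set.Ioo 0 b)
    (piExit : ℝ → ℝ)
    (hpiExit : ∀ r, piExit r =
      Real.sinh ((b - x_R) * Real.sqrt (μ ^ 2 + 2 * r)) /
      (Real.sinh ((b - x_R) * Real.sqrt (μ ^ 2 + 2 * r)) +
        Real.exp (b * μ) * Real.sinh (x_R * Real.sqrt (μ ^ 2 + 2 * r)))) :
    (x_R < b / 2 → Tendsto piExit atTop (nhds 1)) ∧
    (x_R = b / 2 → Tendsto piExit atTop (nhds (1 / (1 + Real.exp (μ * b))))) ∧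
    (x_R > b / 2 → Tendsto piExit atTop (nhds 0)) := by
  obtain ⟨hx0, hxb⟩ := hxR
  set β : ℝ → ℝ := fun r => Real.sqrt (μ ^ 2 + 2 * r) with hβdef
  have hβ : Tendsto β atTop atTop := by
    rw [tendsto_atTop_atTop]
    intro M
    refine ⟨M ^ 2 / 2, fun r hr => ?_⟩
    have h1 : M ^ 2 ≤ μ ^ 2 + 2 * r := by nlinarith
    calc M ≤ |M| := le_abs_self M
      _ = Real.sqrt (M ^ 2) := (Real.sqrt_sq_eq_abs M).symm
      _ ≤ β r := Real.sqrt_le_sqrt h1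
  have hβpos : ∀ᶠ r in atTop, 0 < β r := by
    filter_upwards [eventually_gt_atTop 0] with r hr
    have : 0 < μ ^ 2 + 2 * r := by positivity
    exact Real.sqrt_pos.mpr this
  have hK : 0 < Real.exp (b * μ) := Real.exp_pos _
  refine ⟨?_, ?_, ?_⟩
  · intro hlt
    have hc : x_R < b - x_R := by linarith
    have hQ : Tendsto (fun r => Real.sinh (x_R * β r) / Real.sinh ((b - x_R) * β r))
        atTop (nhds 0) := (ratio0 x_R (b - x_R) hx0 hc).comp hβ
    have hlim : Tendsto (fun r => 1 / (1 + Real.exp (b * μ) *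
        (Real.sinh (x_R * β r) / Real.sinh ((b - x_R) * β r)))) atTop (nhds 1) := by
      have h := Tendsto.div (tendsto_const_nhds (x := (1 : ℝ)))
        (tendsto_const_nhds.add (tendsto_const_nhds.mul hQ))
        (by norm_num : (1 : ℝ) + Real.exp (b * μ) * 0 ≠ 0)
      have he : (1 : ℝ) / (1 + Real.exp (b * μ) * 0) = 1 := by norm_num
      rw [he] at h
      exact h.congr fun r => rfl
    refine hlim.congr' ?_
    filter_upwards [hβpos] with r hr
    have h1 : 0 < Real.sinh (x_R * β r) := Real.sinh_pos_iff.mpr (by positivity)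
    have h2 : 0 < Real.sinh ((b - x_R) * β r) := Real.sinh_pos_iff.mpr (by nlinarith)
    rw [hpiExit r]
    have hden : Real.sinh ((b - x_R) * Real.sqrt (μ ^ 2 + 2 * r)) + Real.exp (b * μ) * Real.sinh (x_R * Real.sqrt (μ ^ 2 + 2 * r)) ≠ 0 := by positivity
    have h2' : Real.sinh ((b - x_R) * Real.sqrt (μ ^ 2 + 2 * r)) ≠ 0 := h2.ne'
    field_simp
    simp only [hβdef]
    ring_nf
  · intro heq
    have hbx : b - x_R = x_R := by rw [heq]; ring
    have : Tendsto (fun _ : ℝ => 1 / (1 + Real.exp (μ * b))) atTop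
        (nhds (1 / (1 + Real.exp (μ * b)))) := tendsto_const_nhds
    refine this.congr' ?_
    filter_upwards [hβpos] with r hr
    have h1 : 0 < Real.sinh (x_R * β r) := Real.sinh_pos_iff.mpr (by positivity)
    rw [hpiExit r, hbx, mul_comm μ b]
    have h1' : Real.sinh (x_R * Real.sqrt (μ ^ 2 + 2 * r)) ≠ 0 := h1.ne'
    have hden : Real.sinh (x_R * Real.sqrt (μ ^ 2 + 2 * r)) + Real.exp (b * μ) * Real.sinh (x_R * Real.sqrt (μ ^ 2 + 2 * r)) ≠ 0 := by positivity
    have hk1 : (1 : ℝ) + Real.exp (b * μ) ≠ 0 := by positivity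
    field_simp
  · intro hgt
    have hc : b - x_R < x_R := by linarith
    have hc0 : 0 < b - x_R := by linarith
    have hQ : Tendsto (fun r => Real.sinh ((b - x_R) * β r) / Real.sinh (x_R * β r))
        atTop (nhds 0) := (ratio0 (b - x_R) x_R hc0 hc).comp hβ
    have hlim : Tendsto (fun r => (Real.sinh ((b - x_R) * β r) / Real.sinh (x_R * β r)) /
        ((Real.sinh ((b - x_R) * β r) / Real.sinh (x_R * β r)) + Real.exp (b * μ)))
        atTop (nhds 0) := by
      have := Tendsto.div hQ (hQ.add tendsto_const_nhds)
        (by simpa using hK.ne' : (0 : ℝ) + Real.exp (b * μ) ≠ 0)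
      rw [zero_div] at this
      exact this
    refine hlim.congr' ?_
    filter_upwards [hβpos] with r hr
    have h1 : 0 < Real.sinh (x_R * β r) := Real.sinh_pos_iff.mpr (by positivity)
    have h2 : 0 < Real.sinh ((b - x_R) * β r) := Real.sinh_pos_iff.mpr (by positivity)
    rw [hpiExit r]
    have hden : Real.sinh ((b - x_R) * Real.sqrt (μ ^ 2 + 2 * r)) + Real.exp (b * μ) * Real.sinh (x_R * Real.sqrt (μ ^ 2 + 2 * r)) ≠ 0 := by positivity
    have h1' : Real.sinh (x_R * Real.sqrt (μ ^ 2 + 2 * r)) ≠ 0 := h1.ne'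
    rw [eq_comm]
    field_simp
    simp only [hβdef]
    ring_nf
end

section
/- Let b>0, r>0, λ>0 and set α=√(2(λ+r)), x_R∈(0,b). Define Q(x,λ) = (sinh(αb) − sinh(αx) − sinh(α(b−x))) / (λ·sinh(αb) + r·sinh(αx_R) + r·sinh(α(b−x_R))) for x∈[0,b]. Then Q(·,λ) satisfies (1/2)·∂²Q/∂x²(x,λ) − (r+λ)·Q(x,λ) + r·Q(x_R,λ) = −1 for all x∈(0,b), with Q(0,λ)=Q(b,λ)=0. -/
open Real

theorem stmt4 (b r lam x_R : ℝ) (hb : 0 < b) (hr : 0 < r) (hlam : 0 < lam)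
    (hxR : x_R ∈ Set.Ioo 0 b)
    (α : ℝ) (hα : α = Real.sqrt (2 * (lam + r)))
    (Q : ℝ → ℝ)
    (hQ : ∀ x, Q x =
      (Real.sinh (α * b) - Real.sinh (α * x) - Real.sinh (α * (b - x))) /
      (lam * Real.sinh (α * b) + r * Real.sinh (α * x_R) + r * Real.sinh (α * (b - x_R)))) :
    (∀ x ∈ Set.Ioo 0 b,
      (1 / 2) * deriv (deriv Q) x - (r + lam) * Q x + r * Q x_R = -1) ∧
    Q 0 = 0 ∧ Q b = 0 := by
  set D := lam * Real.sinh (α * b) + r * Real.sinh (α * x_R) + r * Real.sinh (α * (b - x_R))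
    with hD
  have hαpos : 0 < α := by
    rw [hα]; exact Real.sqrt_pos.mpr (by linarith)
  have hα2 : α ^ 2 = 2 * (lam + r) := by
    rw [hα, sq_sqrt (by linarith)]
  have hDpos : 0 < D := by
    have h1 : 0 < Real.sinh (α * b) := Real.sinh_pos_iff.mpr (by positivity)
    have h2 : 0 < Real.sinh (α * x_R) := Real.sinh_pos_iff.mpr (by have := hxR.1; positivity)
    have h3 : 0 < Real.sinh (α * (b - x_R)) := Real.sinh_pos_iff.mpr
      (mul_pos hαpos (by linarith [hxR.2]))
    have := hxR.1
    have := hxR.2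
    nlinarith
  have hQf : Q = fun x =>
      (Real.sinh (α * b) - Real.sinh (α * x) - Real.sinh (α * (b - x))) / D :=
    funext hQ
  have hd1 : ∀ x : ℝ, HasDerivAt Q
      ((-(Real.cosh (α * x) * α) + Real.cosh (α * (b - x)) * α) / D) x := by
    intro x
    rw [hQf]
    have hin0 : HasDerivAt (fun y : ℝ => α * y) α x := by
      simpa using (hasDerivAt_id x).const_mul α
    have h1 : HasDerivAt (fun x : ℝ => Real.sinh (α * x)) (Real.cosh (α * x) * α) x :=
      hin0.sinh
    have h2 : HasDerivAt (fun x : ℝ => Real.sinh (α * (b - x)))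
        (Real.cosh (α * (b - x)) * (-α)) x := by
      have hin : HasDerivAt (fun x : ℝ => α * (b - x)) (-α) x := by
        have : HasDerivAt (fun x : ℝ => b - x) (-1) x :=
          (hasDerivAt_id x).const_sub b
        simpa using this.const_mul α
      exact hin.sinh
    have := (((hasDerivAt_const x (Real.sinh (α * b))).sub h1).sub h2).div_const D
    refine this.congr_deriv ?_
    ring
  have hQd : deriv Q = fun x =>
      ((-(Real.cosh (α * x) * α) + Real.cosh (α * (b - x)) * α) / D) :=
    funext fun x => (hd1 x).deriv
  have hd2 : ∀ x : ℝ, HasDerivAt (deriv Q)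
      ((-(Real.sinh (α * x) * α * α) - Real.sinh (α * (b - x)) * α * α) / D) x := by
    intro x
    rw [hQd]
    have hin0 : HasDerivAt (fun y : ℝ => α * y) α x := by
      simpa using (hasDerivAt_id x).const_mul α
    have h1 : HasDerivAt (fun x : ℝ => Real.cosh (α * x)) (Real.sinh (α * x) * α) x :=
      hin0.cosh
    have h2 : HasDerivAt (fun x : ℝ => Real.cosh (α * (b - x)))
        (Real.sinh (α * (b - x)) * (-α)) x := by
      have hin : HasDerivAt (fun x : ℝ => α * (b - x)) (-α) x := by
        have : HasDerivAt (fun x : ℝ => b - x) (-1) x :=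
          (hasDerivAt_id x).const_sub b
        simpa using this.const_mul α
      exact hin.cosh
    have := (((h1.const_mul (-1 : ℝ)).add h2).mul_const α).div_const D
    refine (this.congr_deriv ?_).congr_of_eventuallyEq (Filter.Eventually.of_forall fun y => ?_)
    · ring
    · simp only [Pi.add_apply]; ring
  refine ⟨fun x hx => ?_, ?_, ?_⟩
  · rw [(hd2 x).deriv, hQ x, hQ x_R]
    have hαα : α * α = 2 * (lam + r) := by nlinarith [hα2]
    rw [mul_assoc (Real.sinh (α * x)), mul_assoc (Real.sinh (α * (b - x))), hαα, hD]
    have hDne : lam * Real.sinh (α * b) + r * Real.sinh (α * x_R) + r * Real.sinh (α * (b - x_R)) ≠ 0 := hDpos.ne'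
    field_simp
    ring
  · rw [hQ 0]
    simp
  · rw [hQ b]
    simp
end

section
/- Let b>0, r>0, λ>0, x_R∈(0,b), α=√(2(λ+r)). Define M(x,λ) = (r·sinh(αx_R) + r·sinh(α(b−x_R)) + λ·sinh(αx) + λ·sinh(α(b−x))) / (λ·sinh(αb) + r·sinh(αx_R) + r·sinh(α(b−x_R))) for x∈[0,b]. Then M(·,λ) satisfies (1/2)·∂²M/∂x²(x,λ) − (r+λ)·M(x,λ) + r·M(x_R,λ) = 0 for all x∈(0,b), with boundary conditions M(0,λ)=M(b,λ)=1. -/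
open Real

theorem stmt5 (b r lam x_R : ℝ) (hb : 0 < b) (hr : 0 < r) (hlam : 0 < lam)
    (hxR : x_R ∈ Set.Ioo 0 b)
    (α : ℝ) (hα : α = Real.sqrt (2 * (lam + r)))
    (M : ℝ → ℝ)
    (hM : ∀ x, M x =
      (r * Real.sinh (α * x_R) + r * Real.sinh (α * (b - x_R)) +
        lam * Real.sinh (α * x) + lam * Real.sinh (α * (b - x))) /
      (lam * Real.sinh (α * b) + r * Real.sinh (α * x_R) + r * Real.sinh (α * (b - x_R)))) :
    (∀ x ∈ Set.Ioo 0 b,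
      (1 / 2) * deriv (deriv M) x - (r + lam) * M x + r * M x_R = 0) ∧
    M 0 = 1 ∧ M b = 1 := by
  set C : ℝ := r * Real.sinh (α * x_R) + r * Real.sinh (α * (b - x_R)) with hC
  set D : ℝ := lam * Real.sinh (α * b) + C with hD
  have hα0 : 0 < α := by
    rw [hα]; positivity
  have hα2 : α * α = 2 * (lam + r) := by
    rw [hα]; exact Real.mul_self_sqrt (by positivity)
  have hCpos : 0 < C := by
    have h1 : 0 < Real.sinh (α * x_R) :=
      Real.sinh_pos_iff.2 (mul_pos hα0 hxR.1)
    have h2 : 0 < Real.sinh (α * (b - x_R)) :=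
      Real.sinh_pos_iff.2 (mul_pos hα0 (by linarith [hxR.2]))
    rw [hC]; positivity
  have hDpos : 0 < D := by
    have h1 : 0 < Real.sinh (α * b) := Real.sinh_pos_iff.2 (mul_pos hα0 hb)
    rw [hD]; positivity
  have hMfun : M = fun x => (C + lam * Real.sinh (α * x) + lam * Real.sinh (α * (b - x))) / D := by
    funext x
    rw [hM x]
    rw [hD, hC]
    ring_nf
  -- first derivative
  have hd1 : ∀ x : ℝ, HasDerivAt M
      ((lam * (Real.cosh (α * x) * α) + lam * (Real.cosh (α * (b - x)) * (-α))) / D) x := by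
    intro x
    rw [hMfun]
    have h1 : HasDerivAt (fun x : ℝ => α * x) α x := by
      simpa using (hasDerivAt_id x).const_mul α
    have h2 : HasDerivAt (fun x : ℝ => α * (b - x)) (-α) x := by
      have : HasDerivAt (fun x : ℝ => b - x) (-1) x := by
        simpa using (hasDerivAt_id x).const_sub b
      simpa using this.const_mul α
    have hs1 : HasDerivAt (fun x : ℝ => Real.sinh (α * x)) (Real.cosh (α * x) * α) x :=
      h1.sinh
    have hs2 : HasDerivAt (fun x : ℝ => Real.sinh (α * (b - x)))
        (Real.cosh (α * (b - x)) * (-α)) x := h2.sinh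
    exact (((hs1.const_mul lam).const_add C).add (hs2.const_mul lam)).div_const D
  have hderiv1 : deriv M = fun x =>
      (lam * (Real.cosh (α * x) * α) + lam * (Real.cosh (α * (b - x)) * (-α))) / D := by
    funext x; exact (hd1 x).deriv
  have hd2 : ∀ x : ℝ, HasDerivAt (deriv M)
      ((lam * (Real.sinh (α * x) * α * α) + lam * (Real.sinh (α * (b - x)) * α * α)) / D) x := by
    intro x
    rw [hderiv1]
    have h1 : HasDerivAt (fun x : ℝ => α * x) α x := by
      simpa using (hasDerivAt_id x).const_mul α
    have h2 : HasDerivAt (fun x : ℝ => α * (b - x)) (-α) x := by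
      have : HasDerivAt (fun x : ℝ => b - x) (-1) x := by
        simpa using (hasDerivAt_id x).const_sub b
      simpa using this.const_mul α
    have hc1 : HasDerivAt (fun x : ℝ => Real.cosh (α * x)) (Real.sinh (α * x) * α) x :=
      h1.cosh
    have hc2 : HasDerivAt (fun x : ℝ => Real.cosh (α * (b - x)))
        (Real.sinh (α * (b - x)) * (-α)) x := h2.cosh
    have := (((hc1.mul_const α).const_mul lam).add
      (((hc2.mul_const (-α)).const_mul lam))).div_const D
    exact this.congr_deriv (by ring)
  have hd2' : ∀ x : ℝ, deriv (deriv M) x =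
      (lam * (Real.sinh (α * x) * α * α) + lam * (Real.sinh (α * (b - x)) * α * α)) / D :=
    fun x => (hd2 x).deriv
  refine ⟨?_, ?_, ?_⟩
  · intro x _
    rw [hd2' x, hM x, hM x_R]
    have hnum : r * Real.sinh (α * x_R) + r * Real.sinh (α * (b - x_R)) +
        lam * Real.sinh (α * x) + lam * Real.sinh (α * (b - x))
        = C + lam * Real.sinh (α * x) + lam * Real.sinh (α * (b - x)) := by
      rw [hC]
    have hnum2 : r * Real.sinh (α * x_R) + r * Real.sinh (α * (b - x_R)) +
        lam * Real.sinh (α * x_R) + lam * Real.sinh (α * (b - x_R))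
        = C + lam * Real.sinh (α * x_R) + lam * Real.sinh (α * (b - x_R)) := by
      rw [hC]
    have hden : lam * Real.sinh (α * b) + r * Real.sinh (α * x_R) +
        r * Real.sinh (α * (b - x_R)) = D := by
      rw [hD, hC]; ring
    rw [hnum, hnum2, hden]
    have hS : lam * (Real.sinh (α * x) * α * α) + lam * (Real.sinh (α * (b - x)) * α * α)
        = 2 * (lam + r) * (lam * Real.sinh (α * x) + lam * Real.sinh (α * (b - x))) := by
      rw [← hα2]; ring
    rw [hS]
    have hCid : C = r * Real.sinh (α * x_R) + r * Real.sinh (α * (b - x_R)) := hC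
    field_simp
    rw [hCid]
    ring
  · rw [hM 0]
    have : α * (0:ℝ) = 0 := by ring
    rw [this, Real.sinh_zero, sub_zero]
    rw [div_eq_one_iff_eq (by rw [hD, hC] at hDpos; linarith)]
    rw [hC]; ring
  · rw [hM b]
    have h0 : α * (b - b) = 0 := by ring
    rw [h0, Real.sinh_zero, mul_zero, add_zero]
    rw [div_eq_one_iff_eq (by rw [hD, hC] at hDpos; linarith)]
    rw [hC]; ring
end

section
/- Let b>0, r>0, x_R∈(0,b). Define T(x) = (sinh(b√(2r)) − sinh(x√(2r)) − sinh((b−x)√(2r))) / (r·(sinh(x_R√(2r)) + sinh((b−x_R)√(2r)))) for x∈[0,b]. Then T satisfies (1/2)T''(x) − r·T(x) + r·T(x_R) = −1 for all x∈(0,b), with T(0)=T(b)=0. -/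
open Real

theorem stmt8 (b r x_R : ℝ) (hb : 0 < b) (hr : 0 < r) (hxR : x_R ∈ Set.Ioo 0 b)
    (T : ℝ → ℝ)
    (hT : ∀ x, T x =
      (Real.sinh (b * Real.sqrt (2 * r)) - Real.sinh (x * Real.sqrt (2 * r)) -
        Real.sinh ((b - x) * Real.sqrt (2 * r))) /
      (r * (Real.sinh (x_R * Real.sqrt (2 * r)) + Real.sinh ((b - x_R) * Real.sqrt (2 * r))))) :
    (∀ x ∈ Set.Ioo 0 b,
      (1 / 2) * deriv (deriv T) x - r * T x + r * T x_R = -1) ∧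
    T 0 = 0 ∧ T b = 0 := by
  set s := Real.sqrt (2 * r) with hs
  have hspos : 0 < s := Real.sqrt_pos.2 (by positivity)
  have hs2 : s * s = 2 * r := Real.mul_self_sqrt (by positivity)
  set C := Real.sinh (b * s) with hC
  set D := r * (Real.sinh (x_R * s) + Real.sinh ((b - x_R) * s)) with hDdef
  have hD : D ≠ 0 := by
    have h1 : 0 < Real.sinh (x_R * s) := Real.sinh_pos_iff.2 (mul_pos hxR.1 hspos)
    have h2 : 0 < Real.sinh ((b - x_R) * s) :=
      Real.sinh_pos_iff.2 (mul_pos (by linarith [hxR.2]) hspos)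
    positivity
  have hTfun : T = fun x => (C - Real.sinh (x * s) - Real.sinh ((b - x) * s)) / D :=
    funext hT
  have hderiv : deriv T = fun x =>
      (0 - Real.cosh (x * s) * (1 * s) - Real.cosh ((b - x) * s) * ((0 - 1) * s)) / D := by
    funext x
    have hA : HasDerivAt (fun x : ℝ => Real.sinh (x * s)) (Real.cosh (x * s) * (1 * s)) x :=
      ((hasDerivAt_id x).mul_const s).sinh
    have hB : HasDerivAt (fun x : ℝ => Real.sinh ((b - x) * s))
        (Real.cosh ((b - x) * s) * ((0 - 1) * s)) x :=
      (((hasDerivAt_const x b).sub (hasDerivAt_id x)).mul_const s).sinh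
    have h := (((hasDerivAt_const x C).sub hA).sub hB).div_const D
    rw [hTfun]
    exact h.deriv
  have hderiv2 : ∀ x, deriv (deriv T) x =
      (0 - Real.sinh (x * s) * (1 * s) * (1 * s) -
        Real.sinh ((b - x) * s) * ((0 - 1) * s) * ((0 - 1) * s)) / D := by
    intro x
    have hA : HasDerivAt (fun x : ℝ => Real.cosh (x * s) * (1 * s))
        (Real.sinh (x * s) * (1 * s) * (1 * s)) x :=
      (((hasDerivAt_id x).mul_const s).cosh).mul_const (1 * s)
    have hB : HasDerivAt (fun x : ℝ => Real.cosh ((b - x) * s) * ((0 - 1) * s))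
        (Real.sinh ((b - x) * s) * ((0 - 1) * s) * ((0 - 1) * s)) x :=
      ((((hasDerivAt_const x b).sub (hasDerivAt_id x)).mul_const s).cosh).mul_const ((0 - 1) * s)
    have h := (((hasDerivAt_const x (0 : ℝ)).sub hA).sub hB).div_const D
    rw [hderiv]
    exact h.deriv
  refine ⟨fun x hx => ?_, ?_, ?_⟩
  · rw [hderiv2 x, hT x, hT x_R]

    rw [show ∀ a c e : ℝ, (1 / 2) * (a / D) - r * (c / D) + r * (e / D) = ((1 / 2) * a - r * c + r * e) / D from fun a c e => by ring]
    rw [div_eq_iff hD]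
    linear_combination (-(Real.sinh (x * s) + Real.sinh ((b - x) * s)) / 2) * hs2 + hDdef
  · rw [hT]; simp [hC]
  · rw [hT]; simp [hC]
end

section
/- Let b>0, x_R∈(0,b). Then lim_{r→+∞} (1/r)·( sinh(b√(2r)) / (sinh(x_R√(2r)) + sinh((b−x_R)√(2r))) − 1 ) = +∞. -/
open Real Filter

theorem stmt9 (b x_R : ℝ) (hb : 0 < b) (hxR : x_R ∈ Set.Ioo 0 b) :
    Tendsto (fun r : ℝ =>
        (1 / r) * (Real.sinh (b * Real.sqrt (2 * r)) /
          (Real.sinh (x_R * Real.sqrt (2 * r)) + Real.sinh ((b - x_R) * Real.sqrt (2 * r))) - 1))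
      atTop atTop := by
  obtain ⟨hx0, hxb⟩ := hxR
  set δ := min x_R (b - x_R) with hδdef
  set M := max x_R (b - x_R) with hMdef
  have hδ : 0 < δ := lt_min hx0 (by linarith)
  have hMδ : δ + M = b := by
    rw [hδdef, hMdef]
    rcases le_total x_R (b - x_R) with h | h
    · rw [min_eq_left h, max_eq_right h]; ring
    · rw [min_eq_right h, max_eq_left h]; ring
  have hM : 0 < M := lt_of_lt_of_le hx0 (le_max_left _ _)
  have hg : Tendsto (fun r : ℝ => δ ^ 3 / 27 * Real.sqrt (2 * r) - 3 / 2) atTop atTop := by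
    apply tendsto_atTop_add_const_right
    apply Tendsto.const_mul_atTop (by positivity : (0:ℝ) < δ ^ 3 / 27)
    have hsq : Tendsto Real.sqrt atTop atTop := by
      apply tendsto_atTop_atTop.mpr
      intro C
      refine ⟨max 0 (C ^ 2), fun r hr => ?_⟩
      rcases le_or_gt C 0 with hC | hC
      · exact le_trans hC (Real.sqrt_nonneg r)
      · exact (Real.le_sqrt hC.le (le_trans (le_max_left _ _) hr)).mpr
          (le_trans (le_max_right _ _) hr)
    exact hsq.comp (tendsto_id.const_mul_atTop two_pos)
  refine tendsto_atTop_mono' _ ?_ hg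
  filter_upwards [eventually_ge_atTop 1] with r hr
  have hr0 : (0:ℝ) < r := lt_of_lt_of_le one_pos hr
  set s := Real.sqrt (2 * r) with hsdef
  have hs0 : 0 < s := Real.sqrt_pos.mpr (by linarith)
  have hss : s ^ 2 = 2 * r := Real.sq_sqrt (by linarith)
  set D := Real.sinh (x_R * s) + Real.sinh ((b - x_R) * s) with hDdef
  have hD : 0 < D := by
    have h1 := Real.sinh_pos_iff.mpr (by positivity : 0 < x_R * s)
    have h2 := Real.sinh_pos_iff.mpr (mul_pos (by linarith : (0:ℝ) < b - x_R) hs0)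
    linarith
  have hDle : D ≤ Real.exp (M * s) := by
    have h1 : Real.sinh (x_R * s) ≤ Real.exp (M * s) / 2 := by
      rw [Real.sinh_eq]
      have he : Real.exp (x_R * s) ≤ Real.exp (M * s) := by
        apply Real.exp_le_exp.mpr
        exact mul_le_mul_of_nonneg_right (le_max_left _ _) hs0.le
      have := Real.exp_pos (-(x_R * s))
      linarith
    have h2 : Real.sinh ((b - x_R) * s) ≤ Real.exp (M * s) / 2 := by
      rw [Real.sinh_eq]
      have he : Real.exp ((b - x_R) * s) ≤ Real.exp (M * s) := by
        apply Real.exp_le_exp.mpr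
        exact mul_le_mul_of_nonneg_right (le_max_right _ _) hs0.le
      have := Real.exp_pos (-((b - x_R) * s))
      linarith
    linarith
  have hnum : (Real.exp (b * s) - 1) / 2 ≤ Real.sinh (b * s) := by
    rw [Real.sinh_eq]
    have he : Real.exp (-(b * s)) ≤ 1 := Real.exp_le_one_iff.mpr (by nlinarith)
    linarith
  have hsinh_nonneg : 0 ≤ Real.sinh (b * s) := (Real.sinh_pos_iff.mpr (by positivity)).le
  have hratio : ((Real.exp (b * s) - 1) / 2) / Real.exp (M * s) ≤ Real.sinh (b * s) / D :=
    div_le_div₀ hsinh_nonneg hnum hD hDle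
  have hstep : (Real.exp (δ * s) - 1) / 2 ≤ ((Real.exp (b * s) - 1) / 2) / Real.exp (M * s) := by
    rw [le_div_iff₀ (Real.exp_pos _)]
    have hexp : Real.exp (δ * s) * Real.exp (M * s) = Real.exp (b * s) := by
      rw [← Real.exp_add, ← hMδ]; ring_nf
    have h1 : (1:ℝ) ≤ Real.exp (M * s) := Real.one_le_exp (by positivity)
    nlinarith
  have hcube : (δ * s / 3) ^ 3 ≤ Real.exp (δ * s) := by
    have h1 : δ * s / 3 + 1 ≤ Real.exp (δ * s / 3) := Real.add_one_le_exp _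
    have h2 : (δ * s / 3) ^ 3 ≤ (δ * s / 3 + 1) ^ 3 := by
      apply pow_le_pow_left₀ (by positivity)
      linarith
    have h3 : (δ * s / 3 + 1) ^ 3 ≤ Real.exp (δ * s / 3) ^ 3 := by
      apply pow_le_pow_left₀ (by positivity)
      exact h1
    have h4 : Real.exp (δ * s / 3) ^ 3 = Real.exp (δ * s) := by
      rw [← Real.exp_nat_mul]
      norm_num
      ring
    linarith
  have hQ : ((δ * s / 3) ^ 3 - 1) / 2 - 1 ≤ Real.sinh (b * s) / D - 1 := by
    have : ((δ * s / 3) ^ 3 - 1) / 2 ≤ (Real.exp (δ * s) - 1) / 2 := by linarith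
    linarith [le_trans this (le_trans hstep hratio)]
  have hmain : δ ^ 3 / 27 * s - 3 / 2 ≤ (1 / r) * (((δ * s / 3) ^ 3 - 1) / 2 - 1) := by
    rw [one_div, ← div_eq_inv_mul, le_div_iff₀ hr0]
    have hs3 : s ^ 3 = 2 * r * s := by
      have : s ^ 3 = s ^ 2 * s := by ring
      rw [this, hss]
    nlinarith [hs0.le, hδ.le, pow_nonneg hδ.le 3]
  calc δ ^ 3 / 27 * s - 3 / 2
      ≤ (1 / r) * (((δ * s / 3) ^ 3 - 1) / 2 - 1) := hmain
    _ ≤ (1 / r) * (Real.sinh (b * s) / D - 1) :=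
        mul_le_mul_of_nonneg_left hQ (by positivity)
end

section
/- Let b>0, μ≠0, x∈(0,b). Define for r>0, β_r=√(μ²+2r) and T_r(x) = (e^{−bμ}sinh(bβ_r) − e^{−μx}sinh(xβ_r) − e^{−(b+x)μ}sinh((b−x)β_r)) / (r·(e^{−x_Rμ}sinh(x_Rβ_r) + e^{−(b+x_R)μ}sinh((b−x_R)β_r))), where x_R∈(0,b) is fixed. Then lim_{r→0⁺} T_r(x) = (1/μ)·( b(1−e^{−2μx})/(1−e^{−2μb}) − x ). -/
open Real Filter

lemma hs' (a c μ : ℝ) :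
    Real.exp (a*μ) * Real.sinh (c*μ) = (Real.exp ((a+c)*μ) - Real.exp ((a-c)*μ))/2 := by
  rw [Real.sinh_eq, show (a+c)*μ = a*μ + c*μ by ring, show (a-c)*μ = a*μ + -(c*μ) by ring,
    Real.exp_add, Real.exp_add]
  ring

lemma hc' (a c μ : ℝ) :
    Real.exp (a*μ) * Real.cosh (c*μ) = (Real.exp ((a+c)*μ) + Real.exp ((a-c)*μ))/2 := by
  rw [Real.cosh_eq, show (a+c)*μ = a*μ + c*μ by ring, show (a-c)*μ = a*μ + -(c*μ) by ring,
    Real.exp_add, Real.exp_add]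
  ring

lemma lemN0 (b μ x : ℝ) (hμ : μ ≠ 0) :
    Real.exp (-b*μ) * Real.sinh (b*|μ|) - Real.exp (-μ*x) * Real.sinh (x*|μ|)
      - Real.exp (-(b+x)*μ) * Real.sinh ((b-x)*|μ|) = 0 := by
  have h1 := hs' (-b) b μ
  have h2 := hs' (-x) x μ
  have h3 := hs' (-(b+x)) (b-x) μ
  rcases hμ.lt_or_gt with h | h
  · rw [abs_of_neg h]
    simp only [mul_neg, Real.sinh_neg]
    ring_nf at h1 h2 h3 ⊢
    linear_combination -h1 + h2 + h3
  · rw [abs_of_pos h]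
    ring_nf at h1 h2 h3 ⊢
    linear_combination h1 - h2 - h3

lemma lemNd (b μ x : ℝ) (hμ : μ ≠ 0) :
    b * (Real.exp (-b*μ) * Real.cosh (b*|μ|)) - x * (Real.exp (-μ*x) * Real.cosh (x*|μ|))
      - (b-x) * (Real.exp (-(b+x)*μ) * Real.cosh ((b-x)*|μ|))
    = (b - x + x * Real.exp (-2*μ*b) - b * Real.exp (-2*μ*x)) / 2 := by
  have h1 := hc' (-b) b μ
  have h2 := hc' (-x) x μ
  have h3 := hc' (-(b+x)) (b-x) μ
  have h0 : Real.exp 0 = 1 := Real.exp_zero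
  rcases hμ.lt_or_gt with h | h
  · rw [abs_of_neg h]
    simp only [mul_neg, Real.cosh_neg]
    ring_nf at h1 h2 h3 ⊢
    linear_combination b*h1 - x*h2 - (b-x)*h3 + ((b-x)/2)*h0
  · rw [abs_of_pos h]
    ring_nf at h1 h2 h3 ⊢
    linear_combination b*h1 - x*h2 - (b-x)*h3 + ((b-x)/2)*h0

lemma lemD (b μ x_R : ℝ) (hμ : μ ≠ 0) :
    |μ| * (Real.exp (-x_R*μ) * Real.sinh (x_R*|μ|)
      + Real.exp (-(b+x_R)*μ) * Real.sinh ((b-x_R)*|μ|))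
    = μ * (1 - Real.exp (-2*μ*b)) / 2 := by
  have h1 := hs' (-x_R) x_R μ
  have h2 := hs' (-(b+x_R)) (b-x_R) μ
  have h0 : Real.exp 0 = 1 := Real.exp_zero
  rcases hμ.lt_or_gt with h | h
  · rw [abs_of_neg h]
    simp only [mul_neg, Real.sinh_neg]
    ring_nf at h1 h2 ⊢
    linear_combination μ*h1 + μ*h2 + (μ/2)*h0
  · rw [abs_of_pos h]
    ring_nf at h1 h2 ⊢
    linear_combination μ*h1 + μ*h2 + (μ/2)*h0

theorem stmt11 (b μ x x_R : ℝ) (hb : 0 < b) (hμ : μ ≠ 0)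
    (hx : x ∈ Set.Ioo 0 b) (hxR : x_R ∈ Set.Ioo 0 b)
    (T : ℝ → ℝ)
    (hT : ∀ r, T r =
      (Real.exp (-b * μ) * Real.sinh (b * Real.sqrt (μ ^ 2 + 2 * r)) -
        Real.exp (-μ * x) * Real.sinh (x * Real.sqrt (μ ^ 2 + 2 * r)) -
        Real.exp (-(b + x) * μ) * Real.sinh ((b - x) * Real.sqrt (μ ^ 2 + 2 * r))) /
      (r * (Real.exp (-x_R * μ) * Real.sinh (x_R * Real.sqrt (μ ^ 2 + 2 * r)) +
        Real.exp (-(b + x_R) * μ) * Real.sinh ((b - x_R) * Real.sqrt (μ ^ 2 + 2 * r))))) :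
    Tendsto T (nhdsWithin 0 (Set.Ioi 0))
      (nhds ((1 / μ) * (b * (1 - Real.exp (-2 * μ * x)) / (1 - Real.exp (-2 * μ * b)) - x))) := by
  obtain ⟨hx0, hxb⟩ := hx
  set m : ℝ := |μ| with hm_def
  have hm : 0 < m := abs_pos.mpr hμ
  set β : ℝ → ℝ := fun r => Real.sqrt (μ ^ 2 + 2 * r) with hβ_def
  set N : ℝ → ℝ := fun y => Real.exp (-b * μ) * Real.sinh (b * y) -
      Real.exp (-μ * x) * Real.sinh (x * y) -
      Real.exp (-(b + x) * μ) * Real.sinh ((b - x) * y) with hN_def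
  set D : ℝ → ℝ := fun y => Real.exp (-x_R * μ) * Real.sinh (x_R * y) +
      Real.exp (-(b + x_R) * μ) * Real.sinh ((b - x_R) * y) with hD_def
  set Nd : ℝ := b * (Real.exp (-b*μ) * Real.cosh (b*m)) - x * (Real.exp (-μ*x) * Real.cosh (x*m))
      - (b-x) * (Real.exp (-(b+x)*μ) * Real.cosh ((b-x)*m)) with hNd_def
  -- basic exp facts
  have hEb : Real.exp (-2*μ*b) ≠ 1 := by
    intro h
    have h2 : (-2*μ*b : ℝ) = 0 := Real.exp_injective (by rw [h, Real.exp_zero])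
    have h3 : μ * b ≠ 0 := mul_ne_zero hμ hb.ne'
    apply h3; linarith
  have hEbne : 1 - Real.exp (-2*μ*b) ≠ 0 := by
    intro h; exact hEb (by linarith)
  -- N m = 0
  have hN0 : N m = 0 := lemN0 b μ x hμ
  -- derivative of N at m
  have hderiv : HasDerivAt N Nd m := by
    have d1 : HasDerivAt (fun y : ℝ => Real.sinh (b * y)) (Real.cosh (b*m) * (b*1)) m :=
      ((hasDerivAt_id m).const_mul b).sinh
    have d2 : HasDerivAt (fun y : ℝ => Real.sinh (x * y)) (Real.cosh (x*m) * (x*1)) m :=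
      ((hasDerivAt_id m).const_mul x).sinh
    have d3 : HasDerivAt (fun y : ℝ => Real.sinh ((b-x) * y)) (Real.cosh ((b-x)*m) * ((b-x)*1)) m :=
      ((hasDerivAt_id m).const_mul (b-x)).sinh
    have := ((d1.const_mul (Real.exp (-b*μ))).sub (d2.const_mul (Real.exp (-μ*x)))).sub
      (d3.const_mul (Real.exp (-(b+x)*μ)))
    refine this.congr_deriv ?_
    rw [hNd_def]; ring
  have hslope : Tendsto (slope N m) (nhdsWithin m {m}ᶜ) (nhds Nd) :=
    hasDerivAt_iff_tendsto_slope.mp hderiv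
  -- β tends to m within the complement of {m}
  have hβcont : Tendsto β (nhdsWithin 0 (Set.Ioi 0)) (nhds m) := by
    have h1 : Tendsto β (nhds 0) (nhds (β 0)) := by
      apply Continuous.tendsto
      exact Real.continuous_sqrt.comp (continuous_const.add (continuous_const.mul continuous_id))
    have h2 : β 0 = m := by
      rw [hβ_def]; simp [Real.sqrt_sq_eq_abs, hm_def]
    rw [← h2]
    exact h1.mono_left nhdsWithin_le_nhds
  have hβgt : ∀ r ∈ Set.Ioi (0:ℝ), m < β r := by
    intro r hr
    have : m = Real.sqrt (μ ^ 2) := by rw [Real.sqrt_sq_eq_abs]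
    rw [this, hβ_def]
    exact Real.sqrt_lt_sqrt (sq_nonneg μ) (by simp at hr; linarith)
  have hβne : Tendsto β (nhdsWithin 0 (Set.Ioi 0)) (nhdsWithin m {m}ᶜ) := by
    rw [tendsto_nhdsWithin_iff]
    refine ⟨hβcont, eventually_nhdsWithin_of_forall fun r hr => ?_⟩
    exact (hβgt r hr).ne'
  have h1 : Tendsto (fun r => slope N m (β r)) (nhdsWithin 0 (Set.Ioi 0)) (nhds Nd) :=
    hslope.comp hβne
  -- D m value and nonvanishing
  have hmD : m * D m = μ * (1 - Real.exp (-2*μ*b)) / 2 := lemD b μ x_R hμ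
  have hDm_ne : D m ≠ 0 := by
    intro h
    rw [h, mul_zero] at hmD
    have : μ * (1 - Real.exp (-2*μ*b)) ≠ 0 := mul_ne_zero hμ hEbne
    apply this; linarith
  -- second factor
  have hDcont : Continuous D := by
    rw [hD_def]
    exact (continuous_const.mul (Real.continuous_sinh.comp (continuous_const.mul continuous_id))).add
      (continuous_const.mul (Real.continuous_sinh.comp (continuous_const.mul continuous_id)))
  have hden : Tendsto (fun r => (β r + m) * D (β r)) (nhdsWithin 0 (Set.Ioi 0))
      (nhds ((m + m) * D m)) :=
    (hβcont.add tendsto_const_nhds).mul ((hDcont.tendsto m).comp hβcont)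
  have hden_ne : (m + m) * D m ≠ 0 := mul_ne_zero (by linarith) hDm_ne
  have h2 : Tendsto (fun r => 2 / ((β r + m) * D (β r))) (nhdsWithin 0 (Set.Ioi 0))
      (nhds (2 / ((m + m) * D m))) :=
    tendsto_const_nhds.div hden hden_ne
  have h3 : Tendsto (fun r => slope N m (β r) * (2 / ((β r + m) * D (β r))))
      (nhdsWithin 0 (Set.Ioi 0)) (nhds (Nd * (2 / ((m + m) * D m)))) := h1.mul h2
  -- eventual equality with T
  have heq : ∀ r ∈ Set.Ioi (0:ℝ), slope N m (β r) * (2 / ((β r + m) * D (β r))) = T r := by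
    intro r hr
    simp only [Set.mem_Ioi] at hr
    rw [hT r]
    have hsq : (β r) ^ 2 = μ ^ 2 + 2 * r := Real.sq_sqrt (by nlinarith [sq_nonneg μ])
    have hgt := hβgt r (by simp [hr])
    have hkey : (β r - m) * (β r + m) = 2 * r := by
      have hm2 : m ^ 2 = μ ^ 2 := sq_abs μ
      nlinarith [hsq, hm2]
    rw [slope_def_field, hN0, sub_zero]
    show N (β r) / (β r - m) * (2 / ((β r + m) * D (β r))) = N (β r) / (r * D (β r))
    by_cases hD0 : D (β r) = 0
    · rw [hD0]; simp
    · have hne1 : β r - m ≠ 0 := by linarith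
      have hne2 : β r + m ≠ 0 := by positivity
      have hrne : r ≠ 0 := ne_of_gt hr
      have h5 : 2 / ((β r + m) * D (β r)) = (β r - m) / (r * D (β r)) := by
        rw [div_eq_div_iff (mul_ne_zero hne2 hD0) (mul_ne_zero hrne hD0)]
        linear_combination (-(D (β r))) * hkey
      rw [h5, div_mul_div_comm, mul_comm (β r - m) (r * D (β r))]
      exact mul_div_mul_right _ _ hne1
  have h4 : Tendsto T (nhdsWithin 0 (Set.Ioi 0)) (nhds (Nd * (2 / ((m + m) * D m)))) := by
    apply h3.congr'
    exact eventually_nhdsWithin_of_forall heq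
  -- identify the limit value
  have hval : Nd * (2 / ((m + m) * D m)) =
      (1 / μ) * (b * (1 - Real.exp (-2 * μ * x)) / (1 - Real.exp (-2 * μ * b)) - x) := by
    have hNdval : Nd = (b - x + x * Real.exp (-2*μ*b) - b * Real.exp (-2*μ*x)) / 2 :=
      lemNd b μ x hμ
    have hmm : (m + m) * D m = μ * (1 - Real.exp (-2*μ*b)) := by
      linear_combination 2 * hmD
    rw [hNdval, hmm]
    set E1 := Real.exp (-2*μ*b) with hE1
    set E2 := Real.exp (-2*μ*x) with hE2
    field_simp
    ring
  rw [hval] at h4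
  exact h4
end

section
/- Let b>0, r>0, x_R∈(0,b). Define c₃ = (1/r)·( x_R·sinh(b√(2r)) − b·sinh(x_R√(2r)) ) / ( sinh((b−x_R)√(2r)) + sinh(x_R√(2r)) ), c₁ = (b/r − c₃(e^{b√(2r)}−1)) / (2 sinh(b√(2r))), c₂ = (−b/r − c₃(1−e^{−b√(2r)})) / (2 sinh(b√(2r))), and u(x) = c₁e^{−x√(2r)} + c₂e^{x√(2r)} + x/r + c₃. Then u satisfies (1/2)u''(x) − r·u(x) + r·u(x_R) = −x on (0,b), with u(0)=u(b)=0. -/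
open Real

theorem stmt14 (b r x_R : ℝ) (hb : 0 < b) (hr : 0 < r) (hxR : x_R ∈ Set.Ioo 0 b)
    (c₁ c₂ c₃ : ℝ)
    (hc3 : c₃ = (1 / r) * (x_R * Real.sinh (b * Real.sqrt (2 * r)) -
      b * Real.sinh (x_R * Real.sqrt (2 * r))) /
      (Real.sinh ((b - x_R) * Real.sqrt (2 * r)) + Real.sinh (x_R * Real.sqrt (2 * r))))
    (hc1 : c₁ = (b / r - c₃ * (Real.exp (b * Real.sqrt (2 * r)) - 1)) /
      (2 * Real.sinh (b * Real.sqrt (2 * r))))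
    (hc2 : c₂ = (-b / r - c₃ * (1 - Real.exp (-b * Real.sqrt (2 * r)))) /
      (2 * Real.sinh (b * Real.sqrt (2 * r))))
    (u : ℝ → ℝ)
    (hu : ∀ x, u x = c₁ * Real.exp (-x * Real.sqrt (2 * r)) +
      c₂ * Real.exp (x * Real.sqrt (2 * r)) + x / r + c₃) :
    (∀ x ∈ Set.Ioo 0 b,
      (1 / 2) * deriv (deriv u) x - r * u x + r * u x_R = -x) ∧
    u 0 = 0 ∧ u b = 0 := by
  obtain ⟨hx0, hxb⟩ := hxR
  set s := Real.sqrt (2 * r) with hs_def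
  have h2r : (0:ℝ) < 2 * r := by linarith
  have hs : 0 < s := Real.sqrt_pos.2 h2r
  have hs2 : s ^ 2 = 2 * r := Real.sq_sqrt h2r.le
  have hrne : r ≠ 0 := ne_of_gt hr
  have hsinhb : 0 < Real.sinh (b * s) := Real.sinh_pos_iff.2 (by positivity)
  have hD : 0 < Real.sinh ((b - x_R) * s) + Real.sinh (x_R * s) := by
    have h1 : 0 < Real.sinh ((b - x_R) * s) := Real.sinh_pos_iff.2 (by nlinarith)
    have h2 : 0 < Real.sinh (x_R * s) := Real.sinh_pos_iff.2 (by positivity)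
    linarith
  have hEb : Real.exp (b * s) ≠ 0 := Real.exp_ne_zero _
  have hEx : Real.exp (x_R * s) ≠ 0 := Real.exp_ne_zero _
  -- rewrite exp of differences
  have hexp1 : Real.exp ((b - x_R) * s) = Real.exp (b * s) / Real.exp (x_R * s) := by
    rw [← Real.exp_sub]; ring_nf
  have hexpnb : Real.exp (-b * s) = (Real.exp (b * s))⁻¹ := by
    rw [← Real.exp_neg]; ring_nf
  have hexpnx : Real.exp (-x_R * s) = (Real.exp (x_R * s))⁻¹ := by
    rw [← Real.exp_neg]; ring_nf
  have hsinhbne : Real.sinh (b * s) ≠ 0 := ne_of_gt hsinhb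
  have hDne : Real.sinh ((b - x_R) * s) + Real.sinh (x_R * s) ≠ 0 := ne_of_gt hD
  set E := Real.exp (b * s) with hE_def
  set F := Real.exp (x_R * s) with hF_def
  have hEE : E - E⁻¹ = 2 * Real.sinh (b * s) := by
    rw [Real.sinh_eq, Real.exp_neg]; ring
  have hI1 : F⁻¹ - F = -(2 * Real.sinh (x_R * s)) := by
    rw [Real.sinh_eq, Real.exp_neg]; ring
  have hexp2 : Real.exp (-((b - x_R) * s)) = F / E := by
    rw [show -((b - x_R) * s) = x_R * s - b * s by ring, Real.exp_sub]
  have hexp1' : Real.exp ((b - x_R) * s) = E / F := by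
    rw [show (b - x_R) * s = b * s - x_R * s by ring, Real.exp_sub]
  have hI2 : (E - 1) * F⁻¹ + (1 - E⁻¹) * F =
      2 * Real.sinh ((b - x_R) * s) + 2 * Real.sinh (x_R * s) := by
    rw [Real.sinh_eq, Real.sinh_eq, hexp1', hexp2, Real.exp_neg]
    field_simp
    ring
  -- key identities
  have h0 : c₁ + c₂ + c₃ = 0 := by
    have J : (b / r - c₃ * (E - 1)) + (-b / r - c₃ * (1 - E⁻¹)) =
        (-c₃) * (2 * Real.sinh (b * s)) := by
      linear_combination (-c₃) * hEE
    rw [hc1, hc2, hexpnb, ← add_div, J,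
      mul_div_assoc, div_self (by positivity : (2 : ℝ) * Real.sinh (b * s) ≠ 0)]
    ring
  have hb0 : c₁ * Real.exp (-b * s) + c₂ * Real.exp (b * s) + b / r + c₃ = 0 := by
    have J : (b / r - c₃ * (E - 1)) * E⁻¹ + (-b / r - c₃ * (1 - E⁻¹)) * E =
        (-(b / r) - c₃) * (2 * Real.sinh (b * s)) := by
      linear_combination (-(b / r) - c₃) * hEE
    rw [hc1, hc2, hexpnb, div_mul_eq_mul_div, div_mul_eq_mul_div, ← add_div, J,
      mul_div_assoc, div_self (by positivity : (2 : ℝ) * Real.sinh (b * s) ≠ 0)]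
    ring
  have hxr : c₁ * Real.exp (-x_R * s) + c₂ * Real.exp (x_R * s) + x_R / r = 0 := by
    have hc3d : c₃ * (Real.sinh ((b - x_R) * s) + Real.sinh (x_R * s)) =
        (x_R * Real.sinh (b * s) - b * Real.sinh (x_R * s)) / r := by
      rw [hc3]; field_simp
    have J : (b / r - c₃ * (E - 1)) * F⁻¹ + (-b / r - c₃ * (1 - E⁻¹)) * F =
        (-(x_R / r)) * (2 * Real.sinh (b * s)) := by
      linear_combination (b / r) * hI1 - c₃ * hI2 - 2 * hc3d
    rw [hc1, hc2, hexpnb, hexpnx, div_mul_eq_mul_div, div_mul_eq_mul_div, ← add_div, J,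
      mul_div_assoc, div_self (by positivity : (2 : ℝ) * Real.sinh (b * s) ≠ 0)]
    ring
  -- u as explicit function and derivatives
  have hufun : u = fun x => c₁ * Real.exp (-x * s) + c₂ * Real.exp (x * s) + x / r + c₃ :=
    funext hu
  have hd1 : ∀ x : ℝ, HasDerivAt u (c₁ * (-s * Real.exp (-x * s)) + c₂ * (s * Real.exp (x * s)) + 1 / r) x := by
    intro x
    rw [hufun]
    have h1 : HasDerivAt (fun x : ℝ => Real.exp (-x * s)) (-s * Real.exp (-x * s)) x := by
      have := (((hasDerivAt_id x).neg.mul_const s).exp)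
      simpa [mul_comm] using this
    have h2 : HasDerivAt (fun x : ℝ => Real.exp (x * s)) (s * Real.exp (x * s)) x := by
      have := (((hasDerivAt_id x).mul_const s).exp)
      simpa [mul_comm] using this
    have h3 : HasDerivAt (fun x : ℝ => x / r) (1 / r) x := by
      simpa using (hasDerivAt_id x).div_const r
    exact (((h1.const_mul c₁).add (h2.const_mul c₂)).add h3).add_const c₃
  have hderiv1 : deriv u = fun x => c₁ * (-s * Real.exp (-x * s)) + c₂ * (s * Real.exp (x * s)) + 1 / r :=
    funext fun x => (hd1 x).deriv
  have hd2 : ∀ x : ℝ, HasDerivAt (deriv u)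
      (c₁ * (s ^ 2 * Real.exp (-x * s)) + c₂ * (s ^ 2 * Real.exp (x * s))) x := by
    intro x
    rw [hderiv1]
    have h1 : HasDerivAt (fun x : ℝ => Real.exp (-x * s)) (-s * Real.exp (-x * s)) x := by
      have := (((hasDerivAt_id x).neg.mul_const s).exp)
      simpa [mul_comm] using this
    have h2 : HasDerivAt (fun x : ℝ => Real.exp (x * s)) (s * Real.exp (x * s)) x := by
      have := (((hasDerivAt_id x).mul_const s).exp)
      simpa [mul_comm] using this
    have := (((h1.const_mul (c₁ * -s)).add (h2.const_mul (c₂ * s))).add_const (1 / r))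
    have hf : (fun x => c₁ * (-s * Real.exp (-x * s)) + c₂ * (s * Real.exp (x * s)) + 1 / r) =
        (fun x => ((fun y => c₁ * -s * Real.exp (-y * s)) + fun y => c₂ * s * Real.exp (y * s)) x + 1 / r) := by
      funext y; simp only [Pi.add_apply]; ring
    rw [hf]
    exact this.congr_deriv (by ring)
  refine ⟨fun x hx => ?_, ?_, ?_⟩
  · rw [(hd2 x).deriv, hu x, hu x_R, hs2]
    have : c₁ * Real.exp (-x_R * s) + c₂ * Real.exp (x_R * s) = -(x_R / r) := by linarith
    rw [this]
    field_simp
    ring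
  · have := hu 0
    simp only [neg_zero, zero_mul, Real.exp_zero, mul_one, zero_div, add_zero] at this
    rw [this]; linarith
  · rw [hu b]; linarith
end
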